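/- The function φ ∈ C(ℝ, ℝ) defined by φ(t) = 1/(2 + sin(t) + sin(πt)) is Poisson stable under the Bebutov translation flow on C(ℝ, ℝ) with the compact-open topology: there exist sequences t_n → +∞ and s_n → −∞ such that the translates φ(· + t_n) → φ and φ(· + s_n) → φ uniformly on every compact subset of ℝ. -/

import Mathlib

open Filter Topology

lemma int_mul_pi_ne_int {c d : ℤ} (hc : c ≠ 0) : (c : ℝ) * Real.pi ≠ (d : ℝ) := by
  intro h
  apply irrational_pi
  have hc' : (c : ℝ) ≠ 0 := Int.cast_ne_zero.mpr hc
  refine ⟨(d : ℚ) / (c : ℚ), ?_⟩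
  push_cast
  field_simp
  linarith

lemma dense_closure_one_pi :
    Dense ((AddSubgroup.closure {1, Real.pi} : AddSubgroup ℝ) : Set ℝ) := by
  rcases (AddSubgroup.closure {1, Real.pi}).dense_or_cyclic with h | ⟨a, ha⟩
  · exact h
  · exfalso
    have h1 : (1 : ℝ) ∈ AddSubgroup.closure {1, Real.pi} :=
      AddSubgroup.subset_closure (by simp)
    have hpi : Real.pi ∈ AddSubgroup.closure {1, Real.pi} :=
      AddSubgroup.subset_closure (by simp)
    rw [ha, AddSubgroup.mem_closure_singleton] at h1 hpi
    obtain ⟨p, hp⟩ := h1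
    obtain ⟨q, hq⟩ := hpi
    rw [zsmul_eq_mul] at hp hq
    have hp0 : p ≠ 0 := by rintro rfl; simp at hp
    refine int_mul_pi_ne_int (c := p) (d := q) hp0 ?_
    calc (p : ℝ) * Real.pi = (p : ℝ) * ((q : ℝ) * a) := by rw [hq]
    _ = (q : ℝ) * ((p : ℝ) * a) := by ring
    _ = (q : ℝ) := by rw [hp]; ring

lemma mem_decomp {x : ℝ} (hx : x ∈ AddSubgroup.closure {1, Real.pi}) :
    ∃ a b : ℤ, x = a * Real.pi + b := by
  induction hx using AddSubgroup.closure_induction with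
  | mem y hy =>
    rcases hy with rfl | rfl
    · exact ⟨0, 1, by simp⟩
    · exact ⟨1, 0, by simp⟩
  | zero => exact ⟨0, 0, by simp⟩
  | add y z _ _ hy hz =>
    obtain ⟨a, b, rfl⟩ := hy
    obtain ⟨a', b', rfl⟩ := hz
    exact ⟨a + a', b + b', by push_cast; ring⟩
  | neg y _ hy =>
    obtain ⟨a, b, rfl⟩ := hy
    exact ⟨-a, -b, by push_cast; ring⟩

lemma exists_good_k (n : ℕ) :
    ∃ k m : ℤ, (n : ℤ) < k ∧ |Real.pi * k - m| < 1 / (n + 1) := by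
  classical
  set f : ℤ → ℝ := fun a => |Real.pi * a - round (Real.pi * a)| with hf
  set s : Finset ℤ := insert 1 (Finset.Icc 1 (n : ℤ)) with hs
  have hsne : s.Nonempty := ⟨1, Finset.mem_insert_self _ _⟩
  set c : ℝ := s.inf' hsne f with hc
  have hfpos : ∀ a ∈ s, 0 < f a := by
    intro a ha
    have ha1 : 1 ≤ a := by
      rcases Finset.mem_insert.mp ha with rfl | h
      · exact le_refl 1
      · exact (Finset.mem_Icc.mp h).1
    have hane : Real.pi * (a : ℝ) ≠ ((round (Real.pi * (a : ℝ)) : ℤ) : ℝ) := by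
      intro h
      exact int_mul_pi_ne_int (c := a) (d := round (Real.pi * (a : ℝ))) (by omega)
        (by rw [mul_comm]; exact h)
    simp only [hf]
    exact abs_pos.mpr (sub_ne_zero.mpr hane)
  have hcpos : 0 < c := by
    rw [hc, Finset.lt_inf'_iff]
    exact hfpos
  set ε : ℝ := min c (min (1 / (n + 1)) 1) with hε
  have hεpos : 0 < ε := by
    have h1 : (0 : ℝ) < 1 / ((n : ℝ) + 1) := by positivity
    exact lt_min hcpos (lt_min h1 one_pos)
  obtain ⟨g, hgS, hg⟩ := dense_closure_one_pi.exists_mem_open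
    (isOpen_Ioo (a := (0:ℝ)) (b := ε)) (Set.nonempty_Ioo.mpr hεpos)
  obtain ⟨a, b, rfl⟩ := mem_decomp hgS
  obtain ⟨hg0, hgε⟩ := hg
  have hεc : ε ≤ c := min_le_left _ _
  have hε1 : ε ≤ 1 := le_trans (min_le_right _ _) (min_le_right _ _)
  have hεn : ε ≤ 1 / (n + 1) := le_trans (min_le_right _ _) (min_le_left _ _)
  have ha0 : a ≠ 0 := by
    rintro rfl
    simp only [Int.cast_zero, zero_mul, zero_add] at hg0 hgε
    have : (1 : ℝ) ≤ b := by exact_mod_cast Int.cast_pos.mp hg0 -- b ≥ 1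
    linarith
  have hclea : ∀ a' : ℤ, 1 ≤ a' → a' ≤ n → ∀ m : ℤ, c ≤ |Real.pi * a' - m| := by
    intro a' h1 h2 m
    have hmem : a' ∈ s := Finset.mem_insert_of_mem (Finset.mem_Icc.mpr ⟨h1, h2⟩)
    calc c ≤ f a' := Finset.inf'_le _ hmem
    _ ≤ |Real.pi * a' - m| := round_le _ m
  have habs : (n : ℤ) < |a| := by
    by_contra h
    push_neg at h
    have h1 : 1 ≤ |a| := Int.one_le_abs ha0
    have := hclea |a| h1 h (if 0 < a then -b else b)
    rcases lt_or_gt_of_ne ha0 with hneg | hpos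
    · have hab : |a| = -a := abs_of_neg hneg
      rw [hab] at this
      simp only [if_neg (by omega : ¬ 0 < a)] at this
      have : c ≤ |(a : ℝ) * Real.pi + b| := by
        rw [show Real.pi * (-a : ℤ) - (b : ℝ) = -((a : ℝ) * Real.pi + b) by push_cast; ring,
          abs_neg] at this
        exact this
      rw [abs_of_pos hg0] at this
      linarith
    · have hab : |a| = a := abs_of_pos hpos
      rw [hab] at this
      simp only [if_pos hpos] at this
      have : c ≤ |(a : ℝ) * Real.pi + b| := by
        rw [show Real.pi * (a : ℤ) - ((-b : ℤ) : ℝ) = (a : ℝ) * Real.pi + b by push_cast; ring]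
          at this
        exact this
      rw [abs_of_pos hg0] at this
      linarith
  rcases lt_or_gt_of_ne ha0 with hneg | hpos
  · refine ⟨-a, b, by rw [abs_of_neg hneg] at habs; omega, ?_⟩
    rw [show Real.pi * ((-a : ℤ) : ℝ) - (b : ℝ) = -((a : ℝ) * Real.pi + b) by push_cast; ring,
      abs_neg, abs_of_pos hg0]
    linarith
  · refine ⟨a, -b, by rw [abs_of_pos hpos] at habs; omega, ?_⟩
    rw [show Real.pi * ((a : ℤ) : ℝ) - ((-b : ℤ) : ℝ) = (a : ℝ) * Real.pi + b by push_cast; ring,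
      abs_of_pos hg0]
    linarith

lemma denom_pos (x : ℝ) : 0 < 2 + Real.sin x + Real.sin (Real.pi * x) := by
  have h1 : -1 ≤ Real.sin x := Real.neg_one_le_sin x
  have h2 : -1 ≤ Real.sin (Real.pi * x) := Real.neg_one_le_sin _
  rcases lt_or_eq_of_le h1 with h1' | h1'
  · linarith
  rcases lt_or_eq_of_le h2 with h2' | h2'
  · linarith
  exfalso
  obtain ⟨k, hk⟩ := Real.sin_eq_neg_one_iff.mp h1'.symm
  obtain ⟨j, hj⟩ := Real.sin_eq_neg_one_iff.mp h2'.symm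
  rw [← hk] at hj
  have hpi := Real.pi_pos
  refine int_mul_pi_ne_int (c := 4 * k - 1) (d := 4 * j - 1) (by omega) ?_
  push_cast
  have : Real.pi * (Real.pi * (4 * (k : ℝ) - 1)) = Real.pi * ((4 : ℝ) * j - 1) := by
    nlinarith [hj]
  have := mul_left_cancel₀ (ne_of_gt hpi) this
  linarith [this]

lemma abs_sin_sub_sin_le (a b : ℝ) : |Real.sin a - Real.sin b| ≤ |a - b| := by
  rw [Real.sin_sub_sin, abs_mul, abs_mul, abs_two]
  have h1 : |Real.sin ((a - b) / 2)| ≤ |(a - b) / 2| := Real.abs_sin_le_abs (x := (a - b) / 2)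
  have h2 : |Real.cos ((a + b) / 2)| ≤ 1 := Real.abs_cos_le_one _
  have h3 : |(a - b) / 2| = |a - b| / 2 := by rw [abs_div, abs_two]
  nlinarith [abs_nonneg (Real.sin ((a - b) / 2)), abs_nonneg (a - b),
    abs_nonneg (Real.cos ((a + b) / 2))]

lemma sin_pi_shift (k m : ℤ) (x : ℝ) :
    |Real.sin (Real.pi * (x + 2 * Real.pi * k)) - Real.sin (Real.pi * x)| ≤
      2 * Real.pi * |Real.pi * k - m| := by
  have key : Real.sin (Real.pi * (x + 2 * Real.pi * k)) =
      Real.sin (Real.pi * x + 2 * Real.pi * (Real.pi * k - m)) := by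
    rw [show Real.pi * x + 2 * Real.pi * (Real.pi * k - m) =
      (Real.pi * (x + 2 * Real.pi * k)) + (-m : ℤ) * (2 * Real.pi) by push_cast; ring]
    rw [Real.sin_add_int_mul_two_pi]
  rw [key]
  calc |Real.sin (Real.pi * x + 2 * Real.pi * (Real.pi * k - m)) - Real.sin (Real.pi * x)|
      ≤ |Real.pi * x + 2 * Real.pi * (Real.pi * k - m) - Real.pi * x| :=
        abs_sin_sub_sin_le _ _
    _ = |2 * Real.pi * (Real.pi * k - m)| := by ring_nf
    _ = 2 * Real.pi * |Real.pi * k - m| := by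
        rw [abs_mul, abs_of_pos (by positivity : (0:ℝ) < 2 * Real.pi)]

lemma key_uniform (K : Set ℝ) (hK : IsCompact K) (r e : ℕ → ℝ)
    (he : Tendsto e atTop (𝓝 0))
    (h1 : ∀ n x, Real.sin (x + r n) = Real.sin x)
    (h2 : ∀ n x, |Real.sin (Real.pi * (x + r n)) - Real.sin (Real.pi * x)| ≤ e n) :
    TendstoUniformlyOn
      (fun n x => 1 / (2 + Real.sin (x + r n) + Real.sin (Real.pi * (x + r n))))
      (fun x => 1 / (2 + Real.sin x + Real.sin (Real.pi * x))) atTop K := by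
  rcases K.eq_empty_or_nonempty with rfl | hne
  · simp [TendstoUniformlyOn]
  have hcont : ContinuousOn (fun x => 2 + Real.sin x + Real.sin (Real.pi * x)) K := by
    fun_prop
  obtain ⟨x0, hx0K, hx0⟩ := hK.exists_isMinOn hne hcont
  set c : ℝ := 2 + Real.sin x0 + Real.sin (Real.pi * x0) with hcdef
  have hcpos : 0 < c := denom_pos x0
  rw [Metric.tendstoUniformlyOn_iff]
  intro ε hε
  have hδ : (0 : ℝ) < min (c / 2) (ε * c ^ 2 / 2) := by positivity
  filter_upwards [he.eventually_lt_const hδ] with n hn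
  intro x hxK
  have hA : c ≤ 2 + Real.sin x + Real.sin (Real.pi * x) := hx0 hxK
  have hen1 : e n < c / 2 := lt_of_lt_of_le hn (min_le_left _ _)
  have hen2 : e n < ε * c ^ 2 / 2 := lt_of_lt_of_le hn (min_le_right _ _)
  have hbd := h2 n x
  have hen0 : 0 ≤ e n := le_trans (abs_nonneg _) hbd
  set A : ℝ := 2 + Real.sin x + Real.sin (Real.pi * x) with hAdef
  set B : ℝ := 2 + Real.sin (x + r n) + Real.sin (Real.pi * (x + r n)) with hBdef
  have hAB : |B - A| ≤ e n := by
    rw [hBdef, hAdef, h1 n x]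
    have : 2 + Real.sin x + Real.sin (Real.pi * (x + r n)) -
        (2 + Real.sin x + Real.sin (Real.pi * x)) =
        Real.sin (Real.pi * (x + r n)) - Real.sin (Real.pi * x) := by ring
    rw [this]
    exact hbd
  have hB : c / 2 ≤ B := by
    have := abs_le.mp hAB
    linarith [this.1]
  rw [Real.dist_eq]
  have hApos : 0 < A := lt_of_lt_of_le hcpos hA
  have hBpos : 0 < B := lt_of_lt_of_le (by linarith) hB
  have heq : 1 / A - 1 / B = (B - A) / (A * B) := by
    field_simp
  rw [heq, abs_div, abs_of_pos (by positivity : 0 < A * B), div_lt_iff₀ (by positivity)]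
  have hABge : c * (c / 2) ≤ A * B := by
    apply mul_le_mul hA hB (by linarith) (le_of_lt hApos)
  clear_value c A B
  have hfinal : ε * (c * (c / 2)) ≤ ε * (A * B) := mul_le_mul_of_nonneg_left hABge hε.le
  nlinarith [abs_nonneg (B - A)]

/-- The function `φ(t) = 1 / (2 + sin t + sin (π t))` is Poisson stable under the
Bebutov translation flow on `C(ℝ, ℝ)` with the compact-open topology: there exist
sequences `t_n → +∞` and `s_n → −∞` such that the translates `φ(· + t_n)` and
`φ(· + s_n)` converge to `φ` uniformly on every compact subset of `ℝ`. -/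
theorem inv_two_add_sin_add_sin_pi_poisson_stable :
    ∃ t s : ℕ → ℝ,
      Tendsto t atTop atTop ∧ Tendsto s atTop atBot ∧
      (∀ K : Set ℝ, IsCompact K →
        TendstoUniformlyOn
          (fun n x => 1 / (2 + Real.sin (x + t n) + Real.sin (Real.pi * (x + t n))))
          (fun x => 1 / (2 + Real.sin x + Real.sin (Real.pi * x))) atTop K) ∧
      (∀ K : Set ℝ, IsCompact K →
        TendstoUniformlyOn
          (fun n x => 1 / (2 + Real.sin (x + s n) + Real.sin (Real.pi * (x + s n))))
          (fun x => 1 / (2 + Real.sin x + Real.sin (Real.pi * x))) atTop K) := by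
  choose k m hk hkm using exists_good_k
  have hpi := Real.pi_gt_three
  refine ⟨fun n => 2 * Real.pi * k n, fun n => 2 * Real.pi * (-k n : ℤ), ?_, ?_, ?_, ?_⟩
  · apply tendsto_atTop_mono (f := fun n : ℕ => (n : ℝ))
    · intro n
      have hkn : ((n : ℝ) + 1) ≤ (k n : ℝ) := by exact_mod_cast hk n
      nlinarith
    · exact tendsto_natCast_atTop_atTop
  · apply tendsto_atBot_mono (f := fun n : ℕ => -(n : ℝ))
    · intro n
      have hkn : ((n : ℝ) + 1) ≤ (k n : ℝ) := by exact_mod_cast hk n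
      push_cast
      nlinarith
    · exact tendsto_neg_atBot_iff.mpr tendsto_natCast_atTop_atTop
  · intro K hK
    apply key_uniform K hK _ (fun n => 2 * Real.pi * (1 / (n + 1)))
    · have : Tendsto (fun n : ℕ => 1 / ((n : ℝ) + 1)) atTop (𝓝 0) :=
        tendsto_one_div_add_atTop_nhds_zero_nat
      simpa using this.const_mul (2 * Real.pi)
    · intro n x
      rw [show x + 2 * Real.pi * (k n : ℝ) = x + (k n : ℤ) * (2 * Real.pi) by ring]
      exact Real.sin_add_int_mul_two_pi x (k n)
    · intro n x
      calc |Real.sin (Real.pi * (x + 2 * Real.pi * k n)) - Real.sin (Real.pi * x)|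
          ≤ 2 * Real.pi * |Real.pi * k n - m n| := sin_pi_shift (k n) (m n) x
        _ ≤ 2 * Real.pi * (1 / (n + 1)) := by
            apply mul_le_mul_of_nonneg_left (le_of_lt (hkm n)) (by positivity)
  · intro K hK
    apply key_uniform K hK _ (fun n => 2 * Real.pi * (1 / (n + 1)))
    · have : Tendsto (fun n : ℕ => 1 / ((n : ℝ) + 1)) atTop (𝓝 0) :=
        tendsto_one_div_add_atTop_nhds_zero_nat
      simpa using this.const_mul (2 * Real.pi)
    · intro n x
      rw [show x + 2 * Real.pi * ((-k n : ℤ) : ℝ) = x + (-k n : ℤ) * (2 * Real.pi) by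
        push_cast; ring]
      exact Real.sin_add_int_mul_two_pi x (-k n)
    · intro n x
      calc |Real.sin (Real.pi * (x + 2 * Real.pi * ((-k n : ℤ) : ℝ))) - Real.sin (Real.pi * x)|
          ≤ 2 * Real.pi * |Real.pi * (-k n : ℤ) - ((-m n : ℤ) : ℝ)| :=
            sin_pi_shift (-k n) (-m n) x
        _ = 2 * Real.pi * |Real.pi * k n - m n| := by
            rw [show Real.pi * ((-k n : ℤ) : ℝ) - ((-m n : ℤ) : ℝ) =
              -(Real.pi * (k n : ℝ) - (m n : ℝ)) by push_cast; ring, abs_neg]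
        _ ≤ 2 * Real.pi * (1 / (n + 1)) := by
            apply mul_le_mul_of_nonneg_left (le_of_lt (hkm n)) (by positivity)
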